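/- For a prime p, a power q of p, and a positive integer n not divisible by p, the number of monic irreducible polynomials in F_q[x] of degree n whose coefficient of x^{n-1} is nonzero equals ((q-1)/(q·n)) · Σ_{d | n} μ(d) · q^{n/d}, where μ is the Möbius function. -/

import Mathlib

open Polynomial ArithmeticFunction

open FiniteField

-- Nat lemma
lemma aux_dvd_of_pow_sub_one_dvd {q d m : ℕ} (hq : 2 ≤ q) (hd : 1 ≤ d)
    (h : q ^ d - 1 ∣ q ^ m - 1) : d ∣ m := by
  set N := q ^ d - 1 with hN
  have hqd : 2 ≤ q ^ d := le_trans hq (Nat.le_self_pow (by omega) q)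
  by_cases hN1 : N = 1
  · -- q^d = 2 forces d = 1
    have : q ^ d = 2 := by omega
    have hd1 : d = 1 := by
      by_contra hcon
      have : 2 ≤ d := by omega
      have : q ^ 2 ≤ q ^ d := Nat.pow_le_pow_right (by omega) this
      have : 4 ≤ q ^ 2 := by nlinarith
      omega
    simp [hd1]
  · have hN2 : 2 ≤ N := by omega
    haveI : NeZero N := ⟨by omega⟩
    have hcast : ∀ j : ℕ, (N ∣ q ^ j - 1) → ((q : ZMod N) ^ j = 1) := by
      intro j hj
      have h1 : 1 ≤ q ^ j := Nat.one_le_pow _ _ (by omega)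
      have : ((q ^ j - 1 : ℕ) : ZMod N) = 0 := (ZMod.natCast_eq_zero_iff _ _).2 hj
      have := congrArg (· + (1 : ZMod N)) this
      simp at this
      calc (q : ZMod N) ^ j = ((q ^ j : ℕ) : ZMod N) := by push_cast; ring
        _ = ((q ^ j - 1 + 1 : ℕ) : ZMod N) := by rw [Nat.sub_add_cancel h1]
        _ = 1 := by push_cast [this]; simp [this]
    have hqd1 : (q : ZMod N) ^ d = 1 := hcast d dvd_rfl
    have hqm1 : (q : ZMod N) ^ m = 1 := hcast m h
    have hfin : IsOfFinOrder (q : ZMod N) := isOfFinOrder_iff_pow_eq_one.2 ⟨d, hd, hqd1⟩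
    set e := orderOf (q : ZMod N) with he
    have hed : e ∣ d := orderOf_dvd_of_pow_eq_one hqd1
    have hem : e ∣ m := orderOf_dvd_of_pow_eq_one hqm1
    have he1 : 1 ≤ e := hfin.orderOf_pos
    -- N ∣ q^e - 1
    have hpe : (q : ZMod N) ^ e = 1 := pow_orderOf_eq_one _
    have : ((q ^ e - 1 : ℕ) : ZMod N) = 0 := by
      have h1 : 1 ≤ q ^ e := Nat.one_le_pow _ _ (by omega)
      have : ((q ^ e : ℕ) : ZMod N) = 1 := by push_cast; rw [hpe]
      have h2 : ((q ^ e - 1 + 1 : ℕ) : ZMod N) = 1 := by rw [Nat.sub_add_cancel h1]; exact this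
      push_cast at h2
      linear_combination h2
    have hdvd : N ∣ q ^ e - 1 := (ZMod.natCast_eq_zero_iff _ _).1 this
    have hne : q ^ e - 1 ≠ 0 := by
      have : 2 ≤ q ^ e := le_trans hq (Nat.le_self_pow (by omega) q)
      omega
    have hle : N ≤ q ^ e - 1 := Nat.le_of_dvd (by omega) hdvd
    have : q ^ d ≤ q ^ e := by omega
    have hde : d ≤ e := (Nat.pow_le_pow_iff_right (by omega)).1 this
    have : e = d := le_antisymm (Nat.le_of_dvd (by omega) hed) hde
    rwa [← this]

-- finiteness
lemma aux_finite_natDegree_le (K : Type) [Field K] [Fintype K] (n : ℕ) :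
    {f : K[X] | f.natDegree ≤ n}.Finite := by
  have hinj : Set.InjOn (fun f : K[X] => fun i : Fin (n + 1) => f.coeff i)
      {f | f.natDegree ≤ n} := by
    intro f hf g hg hfg
    ext i
    by_cases hi : i ≤ n
    · exact congrFun hfg ⟨i, Nat.lt_succ_of_le hi⟩
    · rw [coeff_eq_zero_of_natDegree_lt (lt_of_le_of_lt hf (by omega)),
        coeff_eq_zero_of_natDegree_lt (lt_of_le_of_lt hg (by omega))]
  exact Set.Finite.of_finite_image (Set.toFinite _) hinj
lemma aux_dvd_iff {K : Type} [Field K] [Fintype K] {p q m : ℕ} (hp : p.Prime) [CharP K p]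
    (hq : Fintype.card K = q) (hm : 1 ≤ m) {f : K[X]} (hf : f.Monic) (hirr : Irreducible f) :
    f ∣ X ^ q ^ m - X ↔ f.natDegree ∣ m := by
  subst hq
  haveI := Fact.mk hp
  haveI := Fact.mk hirr
  obtain ⟨k, hk⟩ := FiniteField.card K p
  set q := Fintype.card K with hq
  have hq2 : 2 ≤ q := Fintype.one_lt_card
  set L := AdjoinRoot f
  set α : L := AdjoinRoot.root f
  have hf0 : f ≠ 0 := hirr.ne_zero
  let pb : PowerBasis K L := AdjoinRoot.powerBasis hf0
  haveI : Module.Finite K L := Module.Finite.of_basis pb.basis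
  haveI : Finite L := Module.finite_of_finite K
  haveI : Fintype L := Fintype.ofFinite L
  set d := f.natDegree with hd
  have hd1 : 1 ≤ d := hirr.natDegree_pos
  have hcardL : Fintype.card L = q ^ d := by
    rw [Module.card_eq_pow_finrank (K := K) (V := L), pb.finrank, AdjoinRoot.powerBasis_dim]
  have hdvd_iff : f ∣ X ^ q ^ m - X ↔ α ^ q ^ m = α := by
    rw [← AdjoinRoot.mk_eq_zero (f := f)]
    rw [map_sub, map_pow, AdjoinRoot.mk_X, sub_eq_zero]
  rw [hdvd_iff]
  constructor
  · intro hroot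
    haveI : CharP L p := charP_of_injective_algebraMap (algebraMap K L).injective p
    have hqm : q ^ m = p ^ (↑k * m) := by rw [pow_mul, ← hk.2]
    let ψ : L →ₐ[K] L :=
      { toRingHom := iterateFrobenius L p (↑k * m)
        commutes' := fun a => by
          show iterateFrobenius L p (↑k * m) (algebraMap K L a) = algebraMap K L a
          rw [iterateFrobenius_def, ← map_pow, ← hqm]
          congr 1
          exact FiniteField.pow_card_pow m a }
    have hψα : ψ α = α := by
      show iterateFrobenius L p (↑k * m) α = α
      rw [iterateFrobenius_def, ← hqm]; exact hroot
    have hall : ∀ x : L, x ^ q ^ m = x := by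
      have htop : Algebra.adjoin K {α} = ⊤ := AdjoinRoot.adjoinRoot_eq_top
      have hle : (⊤ : Subalgebra K L) ≤ AlgHom.equalizer ψ (AlgHom.id K L) := by
        rw [← htop]
        apply Algebra.adjoin_le
        intro x hx
        rw [Set.mem_singleton_iff] at hx
        subst hx
        exact hψα
      intro x
      have hx := hle (Algebra.mem_top (A := L) (x := x))
      rw [AlgHom.mem_equalizer] at hx
      have h2 : iterateFrobenius L p (↑k * m) x = x := hx
      rw [iterateFrobenius_def] at h2
      rw [hqm]
      exact h2
    obtain ⟨g, hg⟩ := IsCyclic.exists_generator (α := Lˣ)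
    have horder : orderOf g = q ^ d - 1 := by
      rw [orderOf_eq_card_of_forall_mem_zpowers hg, Nat.card_eq_fintype_card,
        Fintype.card_units, hcardL]
    have hg1 : (g : L) ^ (q ^ m - 1) = 1 := by
      have h1 : (g : L) ^ q ^ m = g := hall g
      have hne : (g : L) ≠ 0 := Units.ne_zero g
      have h2 : (g : L) ^ (q ^ m - 1) * g = 1 * g := by
        rw [one_mul, ← pow_succ, Nat.sub_add_cancel (Nat.one_le_pow _ _ (by omega))]
        exact h1
      exact mul_right_cancel₀ hne h2
    have hgu : g ^ (q ^ m - 1) = 1 := by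
      ext
      push_cast
      exact hg1
    have hdvd : q ^ d - 1 ∣ q ^ m - 1 := horder ▸ orderOf_dvd_of_pow_eq_one hgu
    exact aux_dvd_of_pow_sub_one_dvd hq2 hd1 hdvd
  · rintro ⟨s, rfl⟩
    have : α ^ q ^ (d * s) = α := by
      rw [pow_mul, ← hcardL]
      exact FiniteField.pow_card_pow s α
    exact this
open UniqueFactorizationMonoid in
lemma aux_count {K : Type} [Field K] [Fintype K] {p q : ℕ} (hp : p.Prime) [CharP K p]
    (hq : Fintype.card K = q) (m : ℕ) (hm : 1 ≤ m) :
    ∑ d ∈ m.divisors,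
        d * Nat.card {f : K[X] // f.Monic ∧ Irreducible f ∧ f.natDegree = d} = q ^ m := by
  classical
  have hq2 : 2 ≤ q := hq ▸ Fintype.one_lt_card
  obtain ⟨k, hk⟩ := FiniteField.card K p
  have hpq : p ∣ q ^ m := by
    rw [← hq, hk.2]
    exact dvd_pow (dvd_pow_self p k.2.ne') (by omega)
  set g : K[X] := X ^ q ^ m - X with hg
  have hgsep : g.Separable := galois_poly_separable p (q ^ m) hpq
  have hgm : g.Monic := monic_X_pow_sub (by
    rw [degree_X]
    exact_mod_cast Nat.one_lt_pow (by omega) hq2)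
  have hg0 : g ≠ 0 := hgm.ne_zero
  have hgdeg : g.natDegree = q ^ m := by
    have := FiniteField.X_pow_card_pow_sub_X_natDegree_eq (K' := K) (p := q) (n := m)
      (by omega) (by omega)
    exact this
  set S := normalizedFactors g with hS
  have hnodup : S.Nodup := (squarefree_iff_nodup_normalizedFactors hg0).1 hgsep.squarefree
  set T := S.toFinset with hT
  have hmem : ∀ f : K[X], f ∈ T ↔ f.Monic ∧ Irreducible f ∧ f.natDegree ∣ m := by
    intro f
    constructor
    · intro hf
      rw [hT, Multiset.mem_toFinset] at hf
      have hirr : Irreducible f := irreducible_of_normalized_factor _ hf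
      have hmon : f.Monic := by
        have := normalize_normalized_factor _ hf
        rw [← this]
        exact monic_normalize hirr.ne_zero
      exact ⟨hmon, hirr, (aux_dvd_iff hp hq hm hmon hirr).1 (dvd_of_mem_normalizedFactors hf)⟩
    · rintro ⟨hmon, hirr, hdvd⟩
      have hfg : f ∣ g := (aux_dvd_iff hp hq hm hmon hirr).2 hdvd
      obtain ⟨f', hf', hass⟩ := exists_mem_normalizedFactors_of_dvd hg0 hirr hfg
      have hmon' : f'.Monic := by
        have := normalize_normalized_factor _ hf'
        rw [← this]
        exact monic_normalize (irreducible_of_normalized_factor _ hf').ne_zero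
      rw [hT, Multiset.mem_toFinset]
      rwa [eq_of_monic_of_associated hmon hmon' hass]
  -- sum of degrees of factors
  have hprod : S.prod = g := by
    have hall : (S.map _root_.id).prod.Monic := monic_multiset_prod_of_monic S _root_.id
      (fun f hf => ((hmem f).1 (Multiset.mem_toFinset.2 hf)).1)
    rw [Multiset.map_id] at hall
    exact eq_of_monic_of_associated hall hgm (prod_normalizedFactors hg0)
  have hsum : ∑ f ∈ T, f.natDegree = q ^ m := by
    have h1 : (S.map natDegree).sum = g.natDegree := by
      rw [← hprod, natDegree_multiset_prod]
      intro h0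
      exact (irreducible_of_normalized_factor _ h0).ne_zero rfl
    rw [← hgdeg, ← h1, Finset.sum]
    congr 1
    rw [hT, Multiset.toFinset_val, Multiset.dedup_eq_self.2 hnodup]
  -- fiberwise
  rw [← hsum]
  rw [← Finset.sum_fiberwise_of_maps_to (g := fun f : K[X] => f.natDegree)
    (t := m.divisors) (fun f hf => Nat.mem_divisors.2 ⟨((hmem f).1 hf).2.2, by omega⟩)]
  apply Finset.sum_congr rfl
  intro d hd
  have hdm : d ∣ m := (Nat.mem_divisors.1 hd).1
  have hset : {f : K[X] | f.Monic ∧ Irreducible f ∧ f.natDegree = d}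
      = ↑(T.filter fun f => f.natDegree = d) := by
    ext f
    simp only [Set.mem_setOf_eq, Finset.coe_filter, hmem f]
    constructor
    · rintro ⟨h1, h2, h3⟩; exact ⟨⟨h1, h2, h3 ▸ hdm⟩, h3⟩
    · rintro ⟨⟨h1, h2, _⟩, h3⟩; exact ⟨h1, h2, h3⟩
  have hcard : Nat.card {f : K[X] // f.Monic ∧ Irreducible f ∧ f.natDegree = d}
      = (T.filter fun f => f.natDegree = d).card := by
    rw [← Set.ncard_coe_finset, ← hset, ← Nat.card_coe_set_eq]
    rfl
  rw [hcard]
  rw [Finset.sum_congr rfl (fun f hf => (Finset.mem_filter.1 hf).2)]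
  rw [Finset.sum_const, smul_eq_mul, mul_comm]
lemma aux_coeff_comp {K : Type} [Field K] {n : ℕ} (hn : 1 ≤ n) {f : K[X]} (hf : f.Monic)
    (hdeg : f.natDegree = n) (c : K) :
    (f.comp (X + C c)).coeff (n - 1) = f.coeff (n - 1) + n * c := by
  rw [← taylor_apply, taylor_coeff]
  have hdle : (Polynomial.hasseDeriv (n - 1) f).natDegree < 2 := by
    have := natDegree_hasseDeriv_le f (n - 1)
    rw [hdeg] at this
    omega
  rw [eval_eq_sum_range' hdle]
  rw [Finset.sum_range_succ, Finset.sum_range_one]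
  have h0 : (Polynomial.hasseDeriv (n - 1) f).coeff 0 = f.coeff (n - 1) := by
    rw [hasseDeriv_coeff]
    simp
  have h1 : (Polynomial.hasseDeriv (n - 1) f).coeff 1 = n := by
    rw [hasseDeriv_coeff]
    have he : 1 + (n - 1) = n := by omega
    rw [he]
    have hc : n.choose (n - 1) = n := by
      rw [← Nat.choose_symm (by omega)]
      simp [show n - (n - 1) = 1 by omega]
    rw [hc]
    have hcn : f.coeff n = 1 := by
      rw [← hdeg]; exact hf.coeff_natDegree
    rw [hcn, mul_one]
  rw [h0, h1]
  ring

/-- The number of monic irreducible polynomials of degree `n` (with `p ∤ n`) over a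
finite field of cardinality `q` whose coefficient of `x^(n-1)` is nonzero equals
`((q-1)/(q·n)) · Σ_{d | n} μ(d) q^(n/d)`. -/
theorem stmt3 {K : Type} [Field K] [Fintype K] {p q n : ℕ} (hp : p.Prime) [CharP K p]
    (hq : Fintype.card K = q) (hn : 1 ≤ n) (hpn : ¬ p ∣ n) :
    (q * n : ℤ) *
        Nat.card {f : K[X] // f.Monic ∧ Irreducible f ∧ f.natDegree = n ∧ f.coeff (n - 1) ≠ 0}
      = (q - 1) * ∑ d ∈ n.divisors, (moebius d : ℤ) * (q : ℤ) ^ (n / d) := by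
  classical
  have hq2 : 2 ≤ q := hq ▸ Fintype.one_lt_card
  set N : ℕ → ℕ := fun d => Nat.card {f : K[X] // f.Monic ∧ Irreducible f ∧ f.natDegree = d}
    with hN
  -- Gauss's formula
  have hgauss : (n : ℤ) * N n = ∑ d ∈ n.divisors, (moebius d : ℤ) * (q : ℤ) ^ (n / d) := by
    have hinv := (ArithmeticFunction.sum_eq_iff_sum_mul_moebius_eq
      (R := ℤ) (f := fun d => (d : ℤ) * N d) (g := fun m => (q : ℤ) ^ m)).1
      (fun m hm => by exact_mod_cast aux_count hp hq m hm) n (by omega)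
    rw [← hinv, ← Nat.sum_divisorsAntidiagonal (fun a b => ((moebius a : ℤ)) * (q : ℤ) ^ b)]
    simp
  -- the finite set of monic irreducibles of degree n
  have hSfin : {f : K[X] | f.Monic ∧ Irreducible f ∧ f.natDegree = n}.Finite :=
    (aux_finite_natDegree_le K n).subset fun f hf => le_of_eq hf.2.2
  set A : Finset K[X] := hSfin.toFinset with hA
  have hmemA : ∀ f : K[X], f ∈ A ↔ f.Monic ∧ Irreducible f ∧ f.natDegree = n := by
    intro f; rw [hA, Set.Finite.mem_toFinset]; rfl
  have hNA : N n = A.card := by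
    have hco : {f : K[X] | f.Monic ∧ Irreducible f ∧ f.natDegree = n} = ↑A :=
      (hSfin.coe_toFinset).symm
    rw [show N n = Nat.card {f : K[X] // f.Monic ∧ Irreducible f ∧ f.natDegree = n} from rfl,
      ← Set.ncard_coe_finset, ← hco, ← Nat.card_coe_set_eq]
    rfl
  -- translation bijection
  have hnK : (n : K) ≠ 0 := by
    intro h
    exact hpn ((CharP.cast_eq_zero_iff K p n).1 h)
  have hbij : ∀ t : K, (A.filter fun f => f.coeff (n - 1) = t).card
      = (A.filter fun f => f.coeff (n - 1) = 0).card := by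
    intro t
    set c : K := (n : K)⁻¹ * t with hc
    have hnc : (n : K) * c = t := by
      rw [hc, ← mul_assoc, mul_inv_cancel₀ hnK, one_mul]
    have htrans : ∀ (c' : K) (f : K[X]), f ∈ A → f.comp (X + C c') ∈ A := by
      intro c' f hf
      rw [hmemA] at hf ⊢
      obtain ⟨h1, h2, h3⟩ := hf
      refine ⟨h1.comp_X_add_C c', ?_, ?_⟩
      · have : Irreducible (algEquivAevalXAddC c' f) := (MulEquiv.irreducible_iff _).2 h2
        simpa [algEquivAevalXAddC_apply, ← comp_eq_aeval] using this
      · rw [natDegree_comp, natDegree_X_add_C, mul_one, h3]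
    have hinv : ∀ f : K[X], (f.comp (X + C (-c))).comp (X + C c) = f := by
      intro f
      rw [comp_assoc]
      simp
    have hinv' : ∀ f : K[X], (f.comp (X + C c)).comp (X + C (-c)) = f := by
      intro f
      rw [comp_assoc]
      simp
    refine Finset.card_bij' (fun f _ => f.comp (X + C (-c)))
      (fun f _ => f.comp (X + C c)) ?_ ?_ ?_ ?_
    · intro f hf
      rw [Finset.mem_filter] at hf ⊢
      obtain ⟨hfA, hft⟩ := hf
      obtain ⟨h1, h2, h3⟩ := (hmemA f).1 hfA
      refine ⟨htrans _ f hfA, ?_⟩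
      rw [aux_coeff_comp hn h1 h3, hft, mul_neg, hnc]
      ring
    · intro f hf
      rw [Finset.mem_filter] at hf ⊢
      obtain ⟨hfA, hft⟩ := hf
      obtain ⟨h1, h2, h3⟩ := (hmemA f).1 hfA
      refine ⟨htrans _ f hfA, ?_⟩
      rw [aux_coeff_comp hn h1 h3, hft, hnc]
      ring
    · intro f _; exact hinv f
    · intro f _; exact hinv' f
  -- fiberwise decomposition
  have hfiber : A.card = ∑ t : K, (A.filter fun f => f.coeff (n - 1) = t).card :=
    Finset.card_eq_sum_card_fiberwise fun f _ => Finset.mem_univ _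
  have hA0 : q * (A.filter fun f => f.coeff (n - 1) = 0).card = A.card := by
    rw [hfiber, Finset.sum_congr rfl fun t _ => hbij t, Finset.sum_const, smul_eq_mul, ← hq,
      Fintype.card]
  -- nonzero-trace count
  have hNnz : Nat.card {f : K[X] //
        f.Monic ∧ Irreducible f ∧ f.natDegree = n ∧ f.coeff (n - 1) ≠ 0}
      = (A.filter fun f => f.coeff (n - 1) ≠ 0).card := by
    have hset : {f : K[X] | f.Monic ∧ Irreducible f ∧ f.natDegree = n ∧ f.coeff (n - 1) ≠ 0}
        = ↑(A.filter fun f => f.coeff (n - 1) ≠ 0) := by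
      ext f
      simp only [Set.mem_setOf_eq, Finset.coe_filter, hmemA f]
      tauto
    rw [← Set.ncard_coe_finset, ← hset, ← Nat.card_coe_set_eq]
    rfl
  have hsplit : (A.filter fun f => f.coeff (n - 1) = 0).card
      + (A.filter fun f => f.coeff (n - 1) ≠ 0).card = A.card :=
    Finset.card_filter_add_card_filter_not _
  -- conclude
  rw [hNnz, ← hgauss]
  have h1 : ((A.filter fun f => f.coeff (n - 1) = 0).card : ℤ)
      + ((A.filter fun f => f.coeff (n - 1) ≠ 0).card : ℤ) = (A.card : ℤ) := by
    exact_mod_cast hsplit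
  have h2 : (q : ℤ) * ((A.filter fun f => f.coeff (n - 1) = 0).card : ℤ) = (A.card : ℤ) := by
    exact_mod_cast hA0
  have h3 : (N n : ℤ) = (A.card : ℤ) := by exact_mod_cast hNA
  push_cast
  linear_combination (n : ℤ) * (q : ℤ) * h1 - (n : ℤ) * h2 - ((q : ℤ) - 1) * (n : ℤ) * h3
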